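/- Let $d, \mathfrak{d} \in \mathrm{Sym}_n$ with $\mathfrak{d} \in \mathscr{R}$ and $d \in \mathscr{C}$, and suppose $C_{\t_0}\, d\, \mathrm{Sym}_{\alpha|\beta} \cap R_{\t_0}\,\mathfrak{d}\,\mathrm{Sym}_{\alpha|\beta}$ is a disjoint union of $r$ left cosets of $\mathrm{Sym}_{\alpha|\beta}$ with representatives $d^{(1)},\dots,d^{(r)}$. For each $i$, choose $\sigma_i \in C_{\t_0}$ with $\sigma_i d \in d^{(i)}\mathrm{Sym}_{\alpha|\beta}$, and set $\varepsilon^{(i)} = \mathrm{sgn}(\sigma_i)\,\varepsilon_{\mathfrak{d}}(\sigma_i d)$. Then $\mathfrak{a}_{d,\mathfrak{d}} = |C_{\t_0} \cap d\,\mathrm{Sym}_{\alpha|\beta}\,d^{-1}| \cdot \sum_{i=1}^r \varepsilon^{(i)}$. -/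

import Mathlib

namespace SignedYoung
open Equiv Finset
open scoped Classical

abbrev Sym (n : ℕ) := Equiv.Perm (Fin n)

/-- Index of the block of the composition `γ` containing position `i` (0-based). -/
def blockOf (γ : List ℕ) (i : ℕ) : ℕ :=
  (List.range γ.length).countP (fun j => decide ((γ.take (j + 1)).sum ≤ i))

/-- The Young subgroup of `Sym n` associated to the composition `γ`. -/
def youngSubgroup (n : ℕ) (γ : List ℕ) : Subgroup (Sym n) where
  carrier := {σ | ∀ i : Fin n, blockOf γ (σ i) = blockOf γ i}
  one_mem' := by intro i; simp
  mul_mem' := by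
    intro a b ha hb i
    simp only [Equiv.Perm.mul_apply]
    rw [ha, hb]
  inv_mem' := by
    intro a ha i
    have h := ha (a⁻¹ i)
    rw [← Equiv.Perm.mul_apply, mul_inv_cancel, Equiv.Perm.one_apply] at h
    exact h.symm

/-- The subgroup `Sym_α` of the Young subgroup `Sym_{α|β}`: block-preserving permutations
fixing all points `≥ |α|`. -/
def symA (n : ℕ) (α β : List ℕ) : Set (Sym n) :=
  {σ | σ ∈ youngSubgroup n (α ++ β) ∧ ∀ i : Fin n, α.sum ≤ (i : ℕ) → σ i = i}

/-- The subgroup `Sym_β^{+|α|}`: block-preserving permutations fixing all points `< |α|`. -/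
def symB (n : ℕ) (α β : List ℕ) : Set (Sym n) :=
  {σ | σ ∈ youngSubgroup n (α ++ β) ∧ ∀ i : Fin n, (i : ℕ) < α.sum → σ i = i}

/-- Cells of the Young diagram of the composition `lam`. -/
abbrev Cell (lam : List ℕ) := (i : Fin lam.length) × Fin (lam.get i)

/-- A `lam`-tableau: a bijective labelling of the cells by `1, …, n` (here `Fin n`). -/
abbrev Tab (n : ℕ) (lam : List ℕ) := Cell lam ≃ Fin n

/-- The row stabilizer of a tableau. -/
def rowStab {n : ℕ} {lam : List ℕ} (t : Tab n lam) : Set (Sym n) :=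
  {σ | ∀ a : Fin n, (t.symm (σ a)).1 = (t.symm a).1}

/-- The column stabilizer of a tableau. -/
def colStab {n : ℕ} {lam : List ℕ} (t : Tab n lam) : Set (Sym n) :=
  {σ | ∀ a : Fin n, ((t.symm (σ a)).2 : ℕ) = ((t.symm a).2 : ℕ)}

/-- Colours `c_1 < c_2 < ⋯ < d_1 < d_2 < ⋯` (0-based). -/
abbrev Colour := Lex (ℕ ⊕ ℕ)

def cCol (k : ℕ) : Colour := toLex (Sum.inl k)

def dCol (k : ℕ) : Colour := toLex (Sum.inr k)

/-- `T` is a `lam`-tableau of type `(α|β)`: exactly `α_k` cells of colour `c_k` and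
`β_k` of colour `d_k`. -/
def HasType {lam : List ℕ} (α β : List ℕ) (T : Cell lam → Colour) : Prop :=
  (∀ k : ℕ, (Finset.univ.filter fun c => T c = cCol k).card = α.getD k 0) ∧
  (∀ k : ℕ, (Finset.univ.filter fun c => T c = dCol k).card = β.getD k 0)

/-- The colour of the number `i` under the canonical colouring by `(α|β)`. -/
def colourOfIdx (α β : List ℕ) (i : ℕ) : Colour :=
  if blockOf (α ++ β) i < α.length then cCol (blockOf (α ++ β) i)
  else dCol (blockOf (α ++ β) i - α.length)

/-- The canonical `lam`-tableau of type `(α|β)` associated to the tableau `t0`. -/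
def canonT {n : ℕ} {lam : List ℕ} (t0 : Tab n lam) (α β : List ℕ) : Cell lam → Colour :=
  fun c => colourOfIdx α β (t0 c)

/-- The action `σ · T = T ∘ t0⁻¹ ∘ σ⁻¹ ∘ t0` of `Sym n` on tableaux of type `(α|β)`,
through the fixed tableau `t0`. -/
def actT {n : ℕ} {lam : List ℕ} (t0 : Tab n lam) (σ : Sym n) (T : Cell lam → Colour) :
    Cell lam → Colour :=
  fun c => T (t0.symm (σ⁻¹ (t0 c)))

/-- `T_d = d · T_0`. -/
def TOf {n : ℕ} {lam : List ℕ} (t0 : Tab n lam) (α β : List ℕ) (d : Sym n) :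
    Cell lam → Colour :=
  actT t0 d (canonT t0 α β)

def RowSemistd {lam : List ℕ} (T : Cell lam → Colour) : Prop :=
  ∀ c c' : Cell lam, c.1 = c'.1 → (c.2 : ℕ) < (c'.2 : ℕ) → T c ≤ T c'

def ColSemistd {lam : List ℕ} (T : Cell lam → Colour) : Prop :=
  ∀ c c' : Cell lam, (c.2 : ℕ) = (c'.2 : ℕ) → c.1 < c'.1 → T c ≤ T c'

/-- Repeats in a row occur only for colours `c_k`. -/
def RowRepeatC {lam : List ℕ} (T : Cell lam → Colour) : Prop :=
  ∀ c c' : Cell lam, c.1 = c'.1 → (c.2 : ℕ) ≠ (c'.2 : ℕ) → T c = T c' → ∃ k, T c = cCol k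

/-- Repeats in a column occur only for colours `d_k`. -/
def ColRepeatD {lam : List ℕ} (T : Cell lam → Colour) : Prop :=
  ∀ c c' : Cell lam, (c.2 : ℕ) = (c'.2 : ℕ) → c.1 ≠ c'.1 → T c = T c' → ∃ k, T c = dCol k

def IsSemistd {lam : List ℕ} (T : Cell lam → Colour) : Prop :=
  RowSemistd T ∧ ColSemistd T ∧ RowRepeatC T ∧ ColRepeatD T

/-- A standard tableau: strictly increasing along rows and down columns. -/
def IsStd {n : ℕ} {lam : List ℕ} (t : Tab n lam) : Prop :=
  (∀ c c' : Cell lam, c.1 = c'.1 → (c.2 : ℕ) < (c'.2 : ℕ) → t c < t c') ∧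
  (∀ c c' : Cell lam, (c.2 : ℕ) = (c'.2 : ℕ) → c.1 < c'.1 → t c < t c')

def IsPartition (n : ℕ) (lam : List ℕ) : Prop :=
  lam.Pairwise (· ≥ ·) ∧ (∀ x ∈ lam, 0 < x) ∧ lam.sum = n

def IsBicomp (n : ℕ) (α β : List ℕ) : Prop :=
  (∀ x ∈ α, 0 < x) ∧ (∀ x ∈ β, 0 < x) ∧ α.sum + β.sum = n

/-- `𝒮 = {d : d⁻¹ R_{t0} d ∩ Sym_{α|β} ⊆ Sym_α}`. -/
def RSet {n : ℕ} {lam : List ℕ} (t0 : Tab n lam) (α β : List ℕ) : Set (Sym n) :=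
  {d | ∀ σ ∈ rowStab t0, d⁻¹ * σ * d ∈ youngSubgroup n (α ++ β) →
    d⁻¹ * σ * d ∈ symA n α β}

/-- `𝒞 = {d : d⁻¹ C_{t0} d ∩ Sym_{α|β} ⊆ Sym_β^{+|α|}}`. -/
def CSet {n : ℕ} {lam : List ℕ} (t0 : Tab n lam) (α β : List ℕ) : Set (Sym n) :=
  {d | ∀ σ ∈ colStab t0, d⁻¹ * σ * d ∈ youngSubgroup n (α ++ β) →
    d⁻¹ * σ * d ∈ symB n α β}

/-- The double coset `R_{t0} x Sym_{α|β}`. -/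
def dCoset {n : ℕ} {lam : List ℕ} (t0 : Tab n lam) (α β : List ℕ) (x : Sym n) :
    Set (Sym n) :=
  {ω | ∃ τ ∈ rowStab t0, ∃ ξ ∈ youngSubgroup n (α ++ β), ω = τ * x * ξ}

/-- The double coset `C_{t0} x Sym_{α|β}`. -/
def cCoset {n : ℕ} {lam : List ℕ} (t0 : Tab n lam) (α β : List ℕ) (x : Sym n) :
    Set (Sym n) :=
  {ω | ∃ σ ∈ colStab t0, ∃ ξ ∈ youngSubgroup n (α ++ β), ω = σ * x * ξ}

/-- `ε` is the sign function `ε_𝔡` on the double coset `R_{t0} 𝔡 Sym_{α|β}`: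
`ε(τ 𝔡 ξ_α ξ_β^{+|α|}) = sgn ξ_β`. -/
def IsEps {n : ℕ} {lam : List ℕ} (t0 : Tab n lam) (α β : List ℕ) (𝔡 : Sym n)
    (ε : Sym n → ℤ) : Prop :=
  ∀ τ ∈ rowStab t0, ∀ ξa ∈ symA n α β, ∀ ξb ∈ symB n α β,
    ε (τ * 𝔡 * (ξa * ξb)) = (Equiv.Perm.sign ξb : ℤ)

/-- The coefficient `𝔞_{d,𝔡} = ∑_{σ ∈ C_{t0}, σd ∈ R_{t0} 𝔡 Sym_{α|β}} sgn(σ) ε_𝔡(σ d)`. -/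
noncomputable def coeffA {n : ℕ} {lam : List ℕ} (t0 : Tab n lam) (α β : List ℕ)
    (ε : Sym n → ℤ) (d 𝔡 : Sym n) : ℤ :=
  ∑ σ : Sym n, if σ ∈ colStab t0 ∧ σ * d ∈ dCoset t0 α β 𝔡
    then (Equiv.Perm.sign σ : ℤ) * ε (σ * d) else 0

/-- The multiset of colours in column `j` of `T`. -/
def colMul {lam : List ℕ} (T : Cell lam → Colour) (j : ℕ) : Multiset Colour :=
  (Finset.univ.filter fun c : Cell lam => (c.2 : ℕ) = j).val.map T

noncomputable def sortedCol (m : Multiset Colour) : List Colour := m.sort (· ≤ ·)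

/-- Comparison of column multisets: the sorted lists agree up to position `k`, where
the first is larger. -/
def msGT (m m' : Multiset Colour) : Prop :=
  ∃ k, (∀ s, s < k → (sortedCol m).getD s (cCol 0) = (sortedCol m').getD s (cCol 0)) ∧
    (sortedCol m').getD k (cCol 0) < (sortedCol m).getD k (cCol 0)

/-- The strict column-dominance order `T ⊳ T'`. -/
def TabGT {lam : List ℕ} (T T' : Cell lam → Colour) : Prop :=
  ∃ t, (∀ j, j < t → colMul T j = colMul T' j) ∧ msGT (colMul T t) (colMul T' t)

/-- The column-dominance pre-order `T ⊵ T'`. -/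
def TabGE {lam : List ℕ} (T T' : Cell lam → Colour) : Prop :=
  (∀ j, colMul T j = colMul T' j) ∨ TabGT T T'



section AuxLemmas
variable {n : ℕ} {lam : List ℕ}

lemma sum_take_le' (l : List ℕ) {j k : ℕ} (h : j ≤ k) : (l.take j).sum ≤ (l.take k).sum := by
  rw [show l.take j = (l.take k).take j by rw [List.take_take, min_eq_left h]]
  conv_rhs => rw [← List.take_append_drop j (l.take k)]
  rw [List.sum_append]; exact Nat.le_add_right _ _

lemma blockOf_eq_card (γ : List ℕ) (i : ℕ) :
    blockOf γ i = ((Finset.range γ.length).filter (fun j => (γ.take (j+1)).sum ≤ i)).card := by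
  simp [blockOf, List.countP_eq_length_filter, Finset.filter, Finset.range, Multiset.range]

lemma alpha_le_iff (α β : List ℕ) (i : ℕ) :
    α.sum ≤ i ↔ α.length ≤ blockOf (α ++ β) i := by
  rw [blockOf_eq_card]
  constructor
  · intro h
    have hsub : Finset.range α.length ⊆
        (Finset.range (α ++ β).length).filter (fun j => ((α ++ β).take (j+1)).sum ≤ i) := by
      intro j hj
      rw [Finset.mem_range] at hj
      rw [Finset.mem_filter, Finset.mem_range, List.length_append]
      refine ⟨lt_of_lt_of_le hj (Nat.le_add_right _ _), ?_⟩
      rw [List.take_append_of_le_length (by omega)]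
      calc (α.take (j+1)).sum ≤ (α.take α.length).sum := sum_take_le' _ (by omega)
        _ = α.sum := by rw [List.take_length]
        _ ≤ i := h
    simpa using Finset.card_le_card hsub
  · intro h
    by_contra hlt
    push_neg at hlt
    have hal : 1 ≤ α.length := by
      by_contra h0
      push_neg at h0
      have : α = [] := List.length_eq_zero_iff.mp (by omega)
      subst this
      simp at hlt
    have hsub : (Finset.range (α ++ β).length).filter
        (fun j => ((α ++ β).take (j+1)).sum ≤ i) ⊆ Finset.range (α.length - 1) := by
      intro j hj
      rw [Finset.mem_filter] at hj
      rw [Finset.mem_range]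
      by_contra hge
      push_neg at hge
      have h1 : α.length ≤ j + 1 := by omega
      have h2 : α.sum ≤ ((α ++ β).take (j+1)).sum := by
        calc α.sum = ((α ++ β).take α.length).sum := by rw [List.take_left]
          _ ≤ _ := sum_take_le' _ h1
      omega
    have := Finset.card_le_card hsub
    simp only [Finset.card_range] at this
    omega

/-- Every element of the Young subgroup factors as `ξa * ξb`. -/
lemma young_factor (α β : List ℕ) (ξ : Sym n) (hξ : ξ ∈ youngSubgroup n (α ++ β)) :
    ∃ a ∈ symA n α β, ∃ b ∈ symB n α β, ξ = a * b := by
  have hiff : ∀ x : Fin n, ((x : ℕ) < α.sum) ↔ ((ξ x : ℕ) < α.sum) := by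
    intro x
    have hb := hξ x
    constructor
    · intro hx
      by_contra hge
      push_neg at hge
      have := (alpha_le_iff α β (ξ x)).mp hge
      rw [hb] at this
      have := (alpha_le_iff α β x).mpr this
      omega
    · intro hx
      by_contra hge
      push_neg at hge
      have := (alpha_le_iff α β (x : ℕ)).mp hge
      rw [← hb] at this
      have := (alpha_le_iff α β (ξ x : ℕ)).mpr this
      omega
  set p : Fin n → Prop := fun x => (x : ℕ) < α.sum with hp
  have hiff' : ∀ x : Fin n, ¬ p x ↔ ¬ p (ξ x) := fun x => not_iff_not.mpr (hiff x)
  have hiffS : ∀ x : Fin n, p (ξ x) ↔ p x := fun x => (hiff x).symm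
  have hiffS' : ∀ x : Fin n, ¬ p (ξ x) ↔ ¬ p x := fun x => (hiff' x).symm
  let a : Sym n := Equiv.Perm.ofSubtype (ξ.subtypePerm hiffS)
  let b : Sym n := Equiv.Perm.ofSubtype (ξ.subtypePerm (p := fun x => ¬ p x) hiffS')
  have ha_mem : ∀ x : Fin n, p x → a x = ξ x := by
    intro x hx
    exact Equiv.Perm.ofSubtype_subtypePerm_of_mem hiffS hx
  have ha_fix : ∀ x : Fin n, ¬ p x → a x = x := by
    intro x hx
    exact Equiv.Perm.ofSubtype_subtypePerm_of_not_mem hiffS hx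
  have hb_mem : ∀ x : Fin n, ¬ p x → b x = ξ x := by
    intro x hx
    exact Equiv.Perm.ofSubtype_subtypePerm_of_mem hiffS' hx
  have hb_fix : ∀ x : Fin n, p x → b x = x := by
    intro x hx
    exact Equiv.Perm.ofSubtype_subtypePerm_of_not_mem hiffS' (not_not.mpr hx)
  refine ⟨a, ⟨?_, ?_⟩, b, ⟨?_, ?_⟩, ?_⟩
  · intro x
    by_cases hx : p x
    · rw [ha_mem x hx]; exact hξ x
    · rw [ha_fix x hx]
  · intro x hx
    exact ha_fix x (by simp [p]; omega)
  · intro x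
    by_cases hx : p x
    · rw [hb_fix x hx]
    · rw [hb_mem x hx]; exact hξ x
  · intro x hx
    exact hb_fix x hx
  · ext x
    by_cases hx : p x
    · simp only [Equiv.Perm.mul_apply]
      rw [hb_fix x hx, ha_mem x hx]
    · simp only [Equiv.Perm.mul_apply]
      rw [hb_mem x hx, ha_fix _ ((hiff' x).mp hx)]

lemma colStab_mul (t0 : Tab n lam) {σ τ : Sym n} (hσ : σ ∈ colStab t0)
    (hτ : τ ∈ colStab t0) : σ * τ ∈ colStab t0 := by
  intro a
  simp only [Equiv.Perm.mul_apply]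
  rw [hσ, hτ]

lemma colStab_inv (t0 : Tab n lam) {σ : Sym n} (hσ : σ ∈ colStab t0) :
    σ⁻¹ ∈ colStab t0 := by
  intro a
  have := hσ (σ⁻¹ a)
  rw [← Equiv.Perm.mul_apply, mul_inv_cancel, Equiv.Perm.one_apply] at this
  exact this.symm

lemma symB_mul {α β : List ℕ} {x y : Sym n} (hx : x ∈ symB n α β) (hy : y ∈ symB n α β) :
    x * y ∈ symB n α β := by
  refine ⟨Subgroup.mul_mem _ hx.1 hy.1, ?_⟩
  intro i hi
  simp only [Equiv.Perm.mul_apply]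
  rw [hy.2 i hi, hx.2 i hi]

lemma sign_sq (ξ : Sym n) : ((Equiv.Perm.sign ξ : ℤˣ) : ℤ) * ((Equiv.Perm.sign ξ : ℤˣ) : ℤ) = 1 := by
  rcases Int.units_eq_one_or (Equiv.Perm.sign ξ) with h | h <;> rw [h] <;> norm_num

/-- The summand `sgn σ · ε(σd)` is constant on fibers. -/
lemma const_on_fiber (t0 : Tab n lam) (α β : List ℕ) (d 𝔡 : Sym n)
    (hd : d ∈ CSet t0 α β) (ε : Sym n → ℤ) (hε : IsEps t0 α β 𝔡 ε)
    (σ σ' : Sym n) (hσ : σ ∈ colStab t0) (hσ' : σ' ∈ colStab t0)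
    (h1 : σ' * d ∈ dCoset t0 α β 𝔡)
    (h2 : d⁻¹ * (σ'⁻¹ * σ) * d ∈ youngSubgroup n (α ++ β)) :
    (Equiv.Perm.sign σ : ℤ) * ε (σ * d) = (Equiv.Perm.sign σ' : ℤ) * ε (σ' * d) := by
  have hg : σ'⁻¹ * σ ∈ colStab t0 := colStab_mul t0 (colStab_inv t0 hσ') hσ
  have hξb : d⁻¹ * (σ'⁻¹ * σ) * d ∈ symB n α β := hd _ hg h2
  set ξb : Sym n := d⁻¹ * (σ'⁻¹ * σ) * d with hξbdef
  obtain ⟨τ, hτ, η, hη, heq⟩ := h1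
  obtain ⟨a, ha, b, hb, hab⟩ := young_factor α β η hη
  have heq2 : σ * d = τ * 𝔡 * (a * (b * ξb)) := by
    have : σ * d = σ' * d * ξb := by rw [hξbdef]; group
    rw [this, heq, hab]; group
  have hε1 : ε (σ * d) = (Equiv.Perm.sign (b * ξb) : ℤ) := by
    rw [heq2]; exact hε τ hτ a ha (b * ξb) (symB_mul hb hξb)
  have hε2 : ε (σ' * d) = (Equiv.Perm.sign b : ℤ) := by
    rw [heq, hab]; exact hε τ hτ a ha b hb
  have hsgn : (Equiv.Perm.sign σ : ℤ) = (Equiv.Perm.sign σ' : ℤ) * (Equiv.Perm.sign ξb : ℤ) := by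
    have : σ = σ' * (d * ξb * d⁻¹) := by rw [hξbdef]; group
    rw [this, map_mul, map_mul, map_mul, Equiv.Perm.sign_inv]
    push_cast
    have := sign_sq d
    linear_combination ((Equiv.Perm.sign σ' : ℤ) * (Equiv.Perm.sign ξb : ℤ)) * this
  have hbm : (Equiv.Perm.sign (b * ξb) : ℤ)
      = (Equiv.Perm.sign b : ℤ) * (Equiv.Perm.sign ξb : ℤ) := by
    rw [map_mul]; push_cast; ring
  rw [hε1, hε2, hsgn, hbm]
  linear_combination ((Equiv.Perm.sign σ' : ℤ) * (Equiv.Perm.sign b : ℤ)) * sign_sq ξb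

end AuxLemmas

/-- **Evaluation of `𝔞_{d,𝔡}` (Lemma 3.8(iii)).** Suppose `𝔡 ∈ ℛ`, `d ∈ 𝒞`, and
`C_{t0} d Sym_{α|β} ∩ R_{t0} 𝔡 Sym_{α|β}` is a disjoint union of the `r` left cosets
`d⁽ⁱ⁾ Sym_{α|β}`. Choosing `σ_i ∈ C_{t0}` with `σ_i d ∈ d⁽ⁱ⁾ Sym_{α|β}`, we have
`𝔞_{d,𝔡} = |C_{t0} ∩ d Sym_{α|β} d⁻¹| · ∑ᵢ sgn(σ_i) ε_𝔡(σ_i d)`. -/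
theorem coeffA_eq_card_mul_sum (n : ℕ) (lam : List ℕ) (hl : IsPartition n lam)
    (α β : List ℕ) (hab : IsBicomp n α β) (t0 : Tab n lam)
    (d 𝔡 : Sym n) (h𝔡 : 𝔡 ∈ RSet t0 α β) (hd : d ∈ CSet t0 α β)
    (ε : Sym n → ℤ) (hε : IsEps t0 α β 𝔡 ε)
    (r : ℕ) (D : Fin r → Sym n) (σs : Fin r → Sym n)
    (hD : cCoset t0 α β d ∩ dCoset t0 α β 𝔡 =
      ⋃ i : Fin r, {y | ∃ ξ ∈ youngSubgroup n (α ++ β), y = D i * ξ})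
    (hdisj : ∀ i i' : Fin r, i ≠ i' →
      Disjoint {y : Sym n | ∃ ξ ∈ youngSubgroup n (α ++ β), y = D i * ξ}
        {y : Sym n | ∃ ξ ∈ youngSubgroup n (α ++ β), y = D i' * ξ})
    (hσ : ∀ i : Fin r, σs i ∈ colStab t0 ∧
      ∃ ξ ∈ youngSubgroup n (α ++ β), σs i * d = D i * ξ) :
    coeffA t0 α β ε d 𝔡 =
      (Nat.card ↥(colStab t0 ∩
          {x : Sym n | ∃ ξ ∈ youngSubgroup n (α ++ β), x = d * ξ * d⁻¹}) : ℤ) *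
        ∑ i : Fin r, (Equiv.Perm.sign (σs i) : ℤ) * ε (σs i * d) := by
  classical
  -- the left cosets
  set cosS : Fin r → Set (Sym n) :=
    fun i => {y | ∃ ξ ∈ youngSubgroup n (α ++ β), y = D i * ξ} with hcosS
  have hsubset : ∀ i, cosS i ⊆ cCoset t0 α β d ∩ dCoset t0 α β 𝔡 := by
    intro i y hy
    rw [hD]
    exact Set.mem_iUnion.mpr ⟨i, hy⟩
  -- the fibers
  set F : Fin r → Finset (Sym n) :=
    fun i => Finset.univ.filter (fun σ => σ ∈ colStab t0 ∧ σ * d ∈ cosS i) with hF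
  have hFmem : ∀ i σ, σ ∈ F i ↔ σ ∈ colStab t0 ∧ σ * d ∈ cosS i := by
    intro i σ
    simp [hF]
  -- the support of the sum
  have hsum : coeffA t0 α β ε d 𝔡 =
      ∑ σ ∈ Finset.univ.filter
        (fun σ => σ ∈ colStab t0 ∧ σ * d ∈ dCoset t0 α β 𝔡),
        (Equiv.Perm.sign σ : ℤ) * ε (σ * d) := by
    rw [coeffA, Finset.sum_filter]
  have hΦ : Finset.univ.filter
      (fun σ : Sym n => σ ∈ colStab t0 ∧ σ * d ∈ dCoset t0 α β 𝔡) =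
      Finset.biUnion Finset.univ F := by
    ext σ
    simp only [Finset.mem_filter, Finset.mem_univ, true_and, Finset.mem_biUnion]
    constructor
    · rintro ⟨hσC, hσd⟩
      have hc : σ * d ∈ cCoset t0 α β d :=
        ⟨σ, hσC, 1, Subgroup.one_mem _, by group⟩
      have : σ * d ∈ ⋃ i, cosS i := by
        rw [← hD]; exact ⟨hc, hσd⟩
      obtain ⟨i, hi⟩ := Set.mem_iUnion.mp this
      exact ⟨i, (hFmem i σ).mpr ⟨hσC, hi⟩⟩
    · rintro ⟨i, hi⟩
      obtain ⟨hσC, hσd⟩ := (hFmem i σ).mp hi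
      exact ⟨hσC, (hsubset i hσd).2⟩
  have hdisjF : (↑(Finset.univ : Finset (Fin r)) : Set (Fin r)).PairwiseDisjoint F := by
    intro i _ j _ hij
    simp only [Function.onFun]
    rw [Finset.disjoint_left]
    intro σ hi hj
    obtain ⟨_, hi2⟩ := (hFmem i σ).mp hi
    obtain ⟨_, hj2⟩ := (hFmem j σ).mp hj
    exact (Set.disjoint_left.mp (hdisj i j hij)) hi2 hj2
  -- per-fiber facts
  have hσsF : ∀ i : Fin r, σs i ∈ F i := by
    intro i
    obtain ⟨hC, ξ, hξ, he⟩ := hσ i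
    exact (hFmem i _).mpr ⟨hC, ⟨ξ, hξ, he⟩⟩
  have hconst : ∀ i : Fin r, ∀ σ ∈ F i,
      (Equiv.Perm.sign σ : ℤ) * ε (σ * d) =
      (Equiv.Perm.sign (σs i) : ℤ) * ε (σs i * d) := by
    intro i σ hmem
    obtain ⟨hσC, ξσ, hξσ, heσ⟩ := (hFmem i σ).mp hmem
    obtain ⟨hsC, ξi, hξi, hei⟩ := hσ i
    have h1 : σs i * d ∈ dCoset t0 α β 𝔡 :=
      (hsubset i ⟨ξi, hξi, hei⟩).2
    have h2 : d⁻¹ * ((σs i)⁻¹ * σ) * d ∈ youngSubgroup n (α ++ β) := by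
      have he : d⁻¹ * ((σs i)⁻¹ * σ) * d = (σs i * d)⁻¹ * (σ * d) := by group
      rw [he, hei, heσ, show (D i * ξi)⁻¹ * (D i * ξσ) = ξi⁻¹ * ξσ by group]
      exact Subgroup.mul_mem _ (Subgroup.inv_mem _ hξi) hξσ
    exact const_on_fiber t0 α β d 𝔡 hd ε hε σ (σs i) hσC hsC h1 h2
  have hcard : ∀ i : Fin r, (F i).card =
      Nat.card ↥(colStab t0 ∩
        {x : Sym n | ∃ ξ ∈ youngSubgroup n (α ++ β), x = d * ξ * d⁻¹}) := by
    intro i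
    obtain ⟨hsC, ξi, hξi, hei⟩ := hσ i
    rw [Nat.card_eq_fintype_card, ← Set.toFinset_card]
    apply Finset.card_bij (fun σ _ => (σs i)⁻¹ * σ)
    · intro σ hmem
      obtain ⟨hσC, ξσ, hξσ, heσ⟩ := (hFmem i σ).mp hmem
      rw [Set.mem_toFinset]
      refine ⟨colStab_mul t0 (colStab_inv t0 hsC) hσC, ξi⁻¹ * ξσ,
        Subgroup.mul_mem _ (Subgroup.inv_mem _ hξi) hξσ, ?_⟩
      have he : d⁻¹ * ((σs i)⁻¹ * σ) * d = (σs i * d)⁻¹ * (σ * d) := by group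
      have h3 : d⁻¹ * ((σs i)⁻¹ * σ) * d = ξi⁻¹ * ξσ := by
        rw [he, hei, heσ]; group
      rw [← h3]; group
    · intro a _ b _ h
      exact mul_left_cancel h
    · intro g hg
      rw [Set.mem_toFinset] at hg
      obtain ⟨hgC, ξg, hξg, hgeq⟩ := hg
      refine ⟨σs i * g, ?_, by group⟩
      refine (hFmem i _).mpr ⟨colStab_mul t0 hsC hgC, ξi * ξg,
        Subgroup.mul_mem _ hξi hξg, ?_⟩
      have : g * d = d * ξg := by rw [hgeq]; group
      rw [mul_assoc, this, ← mul_assoc, hei]; group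
  rw [hsum, hΦ, Finset.sum_biUnion hdisjF]
  rw [Finset.mul_sum]
  apply Finset.sum_congr rfl
  intro i _
  rw [Finset.sum_congr rfl (hconst i), Finset.sum_const, ← hcard i, nsmul_eq_mul]


end SignedYoung
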